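/- There is no enumeration (x_1,...,x_6) of P^1(F_5) such that the three cross ratios ρ_i = ρ(x_i, x_{i+1}, x_{i+2}, x_{i+3}), i = 1,2,3, are pairwise distinct; equivalently, the sharply 3-transitive action of PGL_2(F_5) on P^1(F_5) admits no sequencing. -/

import Mathlib

open scoped LinearAlgebra.Projectivization

instance : Fact (Nat.Prime 5) := ⟨by norm_num⟩

/-- The action of an invertible matrix on the projective line `P¹(F) = ℙ F (Fin 2 → F)`,
i.e. the fractional linear transformation determined by `A`. -/
noncomputable def fracLin {F : Type*} [Field F] (A : GL (Fin 2) F) :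
    ℙ F (Fin 2 → F) → ℙ F (Fin 2 → F) :=
  Projectivization.map (Matrix.mulVecLin (A : Matrix (Fin 2) (Fin 2) F)) (by
    intro u v h
    have h2 := congrArg
      (fun w => Matrix.mulVec ((A⁻¹ : GL (Fin 2) F) : Matrix (Fin 2) (Fin 2) F) w) h
    have h1 : ((A⁻¹ : GL (Fin 2) F) : Matrix (Fin 2) (Fin 2) F) *
        ((A : GL (Fin 2) F) : Matrix (Fin 2) (Fin 2) F) = 1 := A.inv_mul
    simpa only [Matrix.mulVecLin_apply, Matrix.mulVec_mulVec, h1, Matrix.one_mulVec] using h2)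

namespace NoSeq

abbrev F5 := ZMod 5

def X : Fin 6 → F5 := ![1,0,1,1,1,1]
def Y : Fin 6 → F5 := ![0,1,1,2,3,4]
def v (k : Fin 6) : Fin 2 → F5 := ![X k, Y k]

abbrev M2 := F5 × F5 × F5 × F5

def mul2 (m n : M2) : M2 :=
  (m.1 * n.1 + m.2.1 * n.2.2.1, m.1 * n.2.1 + m.2.1 * n.2.2.2,
   m.2.2.1 * n.1 + m.2.2.2 * n.2.2.1, m.2.2.1 * n.2.1 + m.2.2.2 * n.2.2.2)

def adj2 (m : M2) : M2 := (m.2.2.2, -m.2.1, -m.2.2.1, m.1)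

def det2 (m : M2) : F5 := m.1 * m.2.2.2 - m.2.1 * m.2.2.1

def mv (m : M2) (u : Fin 2 → F5) : Fin 2 → F5 :=
  ![m.1 * u 0 + m.2.1 * u 1, m.2.2.1 * u 0 + m.2.2.2 * u 1]

def std2 (x0 y0 x1 y1 x2 y2 : F5) : M2 :=
  ((y1*x2 - x1*y2)*x0, (x0*y2 - y0*x2)*x1, (y1*x2 - x1*y2)*y0, (x0*y2 - y0*x2)*y1)

def stdOf (k l m : Fin 6) : M2 := std2 (X k) (Y k) (X l) (Y l) (X m) (Y m)

def ind (i : Fin 3) (j : Fin 4) : Fin 6 := ⟨i.val + j.val, by omega⟩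

def Bm (l : Fin 6 → Fin 6) (i₁ i₂ : Fin 3) : M2 :=
  mul2 (stdOf (l (ind i₂ 0)) (l (ind i₂ 1)) (l (ind i₂ 2)))
    (adj2 (stdOf (l (ind i₁ 0)) (l (ind i₁ 1)) (l (ind i₁ 2))))

abbrev good (l : Fin 6 → Fin 6) (i₁ i₂ : Fin 3) : Prop :=
  det2 (Bm l i₁ i₂) ≠ 0 ∧
    ∀ j : Fin 4, ∃ a : F5, a ≠ 0 ∧ a • v (l (ind i₂ j)) = mv (Bm l i₁ i₂) (v (l (ind i₁ j)))

set_option synthInstance.maxSize 2000 in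
set_option synthInstance.maxHeartbeats 1000000 in
set_option maxHeartbeats 1000000 in
set_option maxRecDepth 10000 in
lemma core : ∀ d e f : Fin 6,
    d ≠ 0 → d ≠ 1 → d ≠ 2 → e ≠ 0 → e ≠ 1 → e ≠ 2 → f ≠ 0 → f ≠ 1 → f ≠ 2 →
    d ≠ e → d ≠ f → e ≠ f →
    ∃ i₁ i₂ : Fin 3, i₁ ≠ i₂ ∧ good ![0,1,2,d,e,f] i₁ i₂ := by decide

set_option maxRecDepth 4000 in
lemma trans3 : ∀ k l m : Fin 6, k ≠ l → k ≠ m → l ≠ m →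
    det2 (stdOf k l m) ≠ 0 ∧
    (∃ a : F5, a ≠ 0 ∧ a • v k = mv (stdOf k l m) (v 0)) ∧
    (∃ a : F5, a ≠ 0 ∧ a • v l = mv (stdOf k l m) (v 1)) ∧
    (∃ a : F5, a ≠ 0 ∧ a • v m = mv (stdOf k l m) (v 2)) := by decide

lemma v_ne (k : Fin 6) : v k ≠ 0 := by fin_cases k <;> decide

lemma inj_aux : ∀ k l : Fin 6, (∃ a : F5, a • v l = v k) → k = l := by decide

lemma surj_aux : ∀ u : Fin 2 → F5, u ≠ 0 → ∃ k : Fin 6, ∃ a : F5, a • v k = u := by decide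

/-- The canonical enumeration of `P¹(F₅)`. -/
noncomputable def pe : Fin 6 ≃ ℙ F5 (Fin 2 → F5) :=
  Equiv.ofBijective (fun k => Projectivization.mk F5 (v k) (v_ne k))
    ⟨fun k l h => inj_aux k l
        ((Projectivization.mk_eq_mk_iff' F5 (v k) (v l) (v_ne k) (v_ne l)).1 h),
      by
        intro p
        induction p using Projectivization.ind with
        | h u hu =>
          obtain ⟨k, a, ha⟩ := surj_aux u hu
          exact ⟨k, ((Projectivization.mk_eq_mk_iff' F5 u (v k) hu (v_ne k)).2 ⟨a, ha⟩).symm⟩⟩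

lemma pe_apply (k : Fin 6) : pe k = Projectivization.mk F5 (v k) (v_ne k) := rfl

/-- Scalar 2×2 data to an actual matrix. -/
def toMat (m : M2) : Matrix (Fin 2) (Fin 2) F5 := !![m.1, m.2.1; m.2.2.1, m.2.2.2]

lemma toMat_det (m : M2) : (toMat m).det = det2 m := by
  simp [toMat, Matrix.det_fin_two_of, det2]

lemma toMat_mulVec (m : M2) (u : Fin 2 → F5) : (toMat m).mulVec u = mv m u := by
  funext i
  fin_cases i <;>
    simp [toMat, mv, Matrix.mulVec, dotProduct, Fin.sum_univ_two]

lemma glMulVec_ne (A : GL (Fin 2) F5) {u : Fin 2 → F5} (hu : u ≠ 0) :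
    (A : Matrix (Fin 2) (Fin 2) F5).mulVec u ≠ 0 := by
  intro h
  apply hu
  have h1 : ((A⁻¹ : GL (Fin 2) F5) : Matrix (Fin 2) (Fin 2) F5) *
      ((A : GL (Fin 2) F5) : Matrix (Fin 2) (Fin 2) F5) = 1 := A.inv_mul
  have h2 := congrArg
    (fun w => Matrix.mulVec ((A⁻¹ : GL (Fin 2) F5) : Matrix (Fin 2) (Fin 2) F5) w) h
  simpa only [Matrix.mulVec_mulVec, h1, Matrix.one_mulVec, Matrix.mulVec_zero] using h2

lemma fracLin_mk (A : GL (Fin 2) F5) (u : Fin 2 → F5) (hu : u ≠ 0) :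
    fracLin A (Projectivization.mk F5 u hu) =
      Projectivization.mk F5 ((A : Matrix (Fin 2) (Fin 2) F5).mulVec u) (glMulVec_ne A hu) :=
  rfl

lemma fracLin_mul (A B : GL (Fin 2) F5) (p : ℙ F5 (Fin 2 → F5)) :
    fracLin (A * B) p = fracLin A (fracLin B p) := by
  induction p using Projectivization.ind with
  | h u hu =>
    rw [fracLin_mk, fracLin_mk, fracLin_mk]
    apply (Projectivization.mk_eq_mk_iff' F5 _ _ _ _).2
    refine ⟨1, ?_⟩
    rw [one_smul, Matrix.mulVec_mulVec, Units.val_mul]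

/-- `fracLin` as an equivalence. -/
noncomputable def flEquiv (A : GL (Fin 2) F5) : ℙ F5 (Fin 2 → F5) ≃ ℙ F5 (Fin 2 → F5) where
  toFun := fracLin A
  invFun := fracLin A⁻¹
  left_inv p := by
    rw [← fracLin_mul]
    induction p using Projectivization.ind with
    | h u hu =>
      rw [fracLin_mk]
      apply (Projectivization.mk_eq_mk_iff' F5 _ _ _ _).2
      refine ⟨1, ?_⟩
      rw [one_smul, Units.val_mul]
      have : ((A⁻¹ : GL (Fin 2) F5) : Matrix (Fin 2) (Fin 2) F5) *
          ((A : GL (Fin 2) F5) : Matrix (Fin 2) (Fin 2) F5) = 1 := A.inv_mul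
      rw [this, Matrix.one_mulVec]
  right_inv p := by
    rw [← fracLin_mul]
    induction p using Projectivization.ind with
    | h u hu =>
      rw [fracLin_mk]
      apply (Projectivization.mk_eq_mk_iff' F5 _ _ _ _).2
      refine ⟨1, ?_⟩
      rw [one_smul, Units.val_mul]
      have : ((A : GL (Fin 2) F5) : Matrix (Fin 2) (Fin 2) F5) *
          ((A⁻¹ : GL (Fin 2) F5) : Matrix (Fin 2) (Fin 2) F5) = 1 := A.mul_inv
      rw [this, Matrix.one_mulVec]

lemma mkGL_coe (m : M2) (h : det2 m ≠ 0) :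
    ((Matrix.GeneralLinearGroup.mkOfDetNeZero (toMat m) (by rwa [toMat_det]) :
        GL (Fin 2) F5) : Matrix (Fin 2) (Fin 2) F5) = toMat m := rfl

lemma good_witness (l : Fin 6 → Fin 6) (i₁ i₂ : Fin 3) (h : good l i₁ i₂) :
    ∃ A : GL (Fin 2) F5, ∀ j : Fin 4,
      fracLin A (pe (l (ind i₁ j))) = pe (l (ind i₂ j)) := by
  obtain ⟨hdet, hmap⟩ := h
  refine ⟨Matrix.GeneralLinearGroup.mkOfDetNeZero (toMat (Bm l i₁ i₂))
    (by rwa [toMat_det]), fun j => ?_⟩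
  obtain ⟨a, ha0, ha⟩ := hmap j
  rw [pe_apply, pe_apply, fracLin_mk]
  apply (Projectivization.mk_eq_mk_iff' F5 _ _ _ _).2
  refine ⟨a, ?_⟩
  rw [ha, mkGL_coe _ hdet, toMat_mulVec]

end NoSeq

open NoSeq in
/-- The sharply 3-transitive action of `PGL₂(F₅)` on `P¹(F₅)` admits no sequencing:
for every enumeration `(x₁,…,x₆)` of the 6 points of `P¹(F₅)`, the three windows
`(x_i, x_{i+1}, x_{i+2}, x_{i+3})`, `i = 1, 2, 3`, do not lie in pairwise distinct
`PGL₂(F₅)`-orbits, i.e. their cross ratios are not pairwise distinct. -/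
theorem stmt_13 (x : Fin 6 ≃ ℙ (ZMod 5) (Fin 2 → ZMod 5)) :
    ∃ i₁ i₂ : Fin 3, i₁ ≠ i₂ ∧
      ∃ A : GL (Fin 2) (ZMod 5), ∀ j : Fin 4,
        fracLin A (x ⟨i₁.val + j.val, by have := i₁.isLt; have := j.isLt; omega⟩) =
          x ⟨i₂.val + j.val, by have := i₂.isLt; have := j.isLt; omega⟩ := by
  classical
  -- normalize the first three points
  set k0 : Fin 6 := pe.symm (x 0) with hk0
  set k1 : Fin 6 := pe.symm (x 1) with hk1
  set k2 : Fin 6 := pe.symm (x 2) with hk2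
  have hne01 : k0 ≠ k1 := fun h => by
    have := congrArg pe h
    simp only [Equiv.apply_symm_apply, hk0, hk1] at this
    exact absurd (x.injective this) (by decide)
  have hne02 : k0 ≠ k2 := fun h => by
    have := congrArg pe h
    simp only [Equiv.apply_symm_apply, hk0, hk2] at this
    exact absurd (x.injective this) (by decide)
  have hne12 : k1 ≠ k2 := fun h => by
    have := congrArg pe h
    simp only [Equiv.apply_symm_apply, hk1, hk2] at this
    exact absurd (x.injective this) (by decide)
  obtain ⟨hdet, ⟨a0, ha00, ha0⟩, ⟨a1, ha10, ha1⟩, ⟨a2, ha20, ha2⟩⟩ :=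
    trans3 k0 k1 k2 hne01 hne02 hne12
  set g : GL (Fin 2) (ZMod 5) :=
    Matrix.GeneralLinearGroup.mkOfDetNeZero (toMat (stdOf k0 k1 k2))
      (by rwa [toMat_det]) with hg
  have hgmap : ∀ (i : Fin 6) (aa : F5), aa ≠ 0 →
      aa • v (pe.symm (x i)) = mv (stdOf k0 k1 k2) (v i) →
      fracLin g (pe i) = x i := by
    intro i aa haa0 haa
    rw [pe_apply, fracLin_mk]
    have : x i = Projectivization.mk F5 (v (pe.symm (x i))) (v_ne _) := by
      conv_lhs => rw [← pe.apply_symm_apply (x i)]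
      exact pe_apply _
    rw [this]
    apply (Projectivization.mk_eq_mk_iff' F5 _ _ _ _).2
    refine ⟨aa, ?_⟩
    rw [haa, hg, mkGL_coe _ hdet, toMat_mulVec]
  have hg0 : fracLin g (pe 0) = x 0 := hgmap 0 a0 ha00 ha0
  have hg1 : fracLin g (pe 1) = x 1 := hgmap 1 a1 ha10 ha1
  have hg2 : fracLin g (pe 2) = x 2 := hgmap 2 a2 ha20 ha2
  -- the normalized enumeration
  set y : Fin 6 ≃ ℙ F5 (Fin 2 → F5) := x.trans (flEquiv g).symm with hy
  have hxy : ∀ s : Fin 6, fracLin g (y s) = x s := by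
    intro s
    show (flEquiv g) ((flEquiv g).symm (x s)) = x s
    exact (flEquiv g).apply_symm_apply (x s)
  have hy0 : y 0 = pe 0 := (flEquiv g).symm_apply_eq.2 hg0.symm
  have hy1 : y 1 = pe 1 := (flEquiv g).symm_apply_eq.2 hg1.symm
  have hy2 : y 2 = pe 2 := (flEquiv g).symm_apply_eq.2 hg2.symm
  set σ : Fin 6 ≃ Fin 6 := y.trans pe.symm with hσ
  have hσ0 : σ 0 = 0 := by rw [hσ]; simp [hy0]
  have hσ1 : σ 1 = 1 := by rw [hσ]; simp [hy1]
  have hσ2 : σ 2 = 2 := by rw [hσ]; simp [hy2]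
  have hpeσ : ∀ s : Fin 6, pe (σ s) = y s := fun s => pe.apply_symm_apply (y s)
  set l : Fin 6 → Fin 6 := ![0, 1, 2, σ 3, σ 4, σ 5] with hl
  have hlσ : ∀ s : Fin 6, l s = σ s := by
    intro s
    fin_cases s
    · exact hσ0.symm
    · exact hσ1.symm
    · exact hσ2.symm
    · rfl
    · rfl
    · rfl
  have hinj : ∀ s t : Fin 6, s ≠ t → σ s ≠ σ t := fun s t h => fun hc => h (σ.injective hc)
  obtain ⟨i₁, i₂, hne, hgood⟩ := core (σ 3) (σ 4) (σ 5)
    (hσ0 ▸ hinj 3 0 (by decide)) (hσ1 ▸ hinj 3 1 (by decide)) (hσ2 ▸ hinj 3 2 (by decide))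
    (hσ0 ▸ hinj 4 0 (by decide)) (hσ1 ▸ hinj 4 1 (by decide)) (hσ2 ▸ hinj 4 2 (by decide))
    (hσ0 ▸ hinj 5 0 (by decide)) (hσ1 ▸ hinj 5 1 (by decide)) (hσ2 ▸ hinj 5 2 (by decide))
    (hinj 3 4 (by decide)) (hinj 3 5 (by decide)) (hinj 4 5 (by decide))
  obtain ⟨A', hA'⟩ := good_witness l i₁ i₂ hgood
  refine ⟨i₁, i₂, hne, g * A' * g⁻¹, fun j => ?_⟩
  show fracLin (g * A' * g⁻¹) (x (ind i₁ j)) = x (ind i₂ j)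
  have h1 : fracLin g⁻¹ (x (ind i₁ j)) = y (ind i₁ j) := by
    show (flEquiv g).symm (x (ind i₁ j)) = y (ind i₁ j)
    rfl
  have h2 : fracLin A' (y (ind i₁ j)) = y (ind i₂ j) := by
    have := hA' j
    rwa [hlσ, hlσ, hpeσ, hpeσ] at this
  rw [fracLin_mul, fracLin_mul, h1, h2, hxy]
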